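/- If β·K < δ, then every nonnegative solution of the TYC-SIT system with μ1 = μ2 = 0 that remains in the region {f + m + s1 + s2 ≤ K, m + s1 + s2 > 0} satisfies V(t) ≤ V(0)·exp(−ct) for c = min(δ − Kβ, δ) > 0, where V = f + m + s1 + s2; hence the solution converges to (0,0,0,0). -/

import Mathlib

open Real Set Filter

theorem stmt_5 (β δ K : ℝ) (hβ : 0 < β) (hδ : 0 < δ) (hK : 0 < K)
    (hstab : β * K < δ)
    (f m s1 s2 : ℝ → ℝ)
    (hf : ∀ t ≥ (0 : ℝ), HasDerivAt f
      (1/2 * f t * m t * β * (1 - (f t + m t + s1 t + s2 t) / K) *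
        (m t / (m t + s1 t + s2 t)) - δ * f t) t)
    (hm : ∀ t ≥ (0 : ℝ), HasDerivAt m
      (1/2 * f t * m t * β * (1 - (f t + m t + s1 t + s2 t) / K) *
        (m t / (m t + s1 t + s2 t))
       + f t * s2 t * β * (1 - (f t + m t + s1 t + s2 t) / K) *
        (s2 t / (m t + s1 t + s2 t)) - δ * m t) t)
    (hs1 : ∀ t ≥ (0 : ℝ), HasDerivAt s1 (-δ * s1 t) t)
    (hs2 : ∀ t ≥ (0 : ℝ), HasDerivAt s2 (-δ * s2 t) t)
    (hnonneg : ∀ t ≥ (0 : ℝ), 0 ≤ f t ∧ 0 ≤ m t ∧ 0 ≤ s1 t ∧ 0 ≤ s2 t)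
    (hreg : ∀ t ≥ (0 : ℝ), 0 < m t + s1 t + s2 t ∧ f t + m t + s1 t + s2 t ≤ K) :
    let c : ℝ := min (δ - K * β) δ
    (0 < c) ∧
    (∀ t ≥ (0 : ℝ),
      f t + m t + s1 t + s2 t ≤ (f 0 + m 0 + s1 0 + s2 0) * Real.exp (-c * t)) ∧
    Filter.Tendsto f Filter.atTop (nhds 0) ∧
    Filter.Tendsto m Filter.atTop (nhds 0) ∧
    Filter.Tendsto s1 Filter.atTop (nhds 0) ∧
    Filter.Tendsto s2 Filter.atTop (nhds 0) := by
  intro c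
  have hcdef : c = min (δ - K * β) δ := rfl
  clear_value c
  have hc : 0 < c := by rw [hcdef]; exact lt_min (by nlinarith) hδ
  set V : ℝ → ℝ := fun t => f t + m t + s1 t + s2 t with hVdef
  set D : ℝ → ℝ := fun t =>
    (1/2 * f t * m t * β * (1 - (f t + m t + s1 t + s2 t) / K) *
        (m t / (m t + s1 t + s2 t)) - δ * f t)
    + (1/2 * f t * m t * β * (1 - (f t + m t + s1 t + s2 t) / K) *
        (m t / (m t + s1 t + s2 t))
       + f t * s2 t * β * (1 - (f t + m t + s1 t + s2 t) / K) *
        (s2 t / (m t + s1 t + s2 t)) - δ * m t)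
    + (-δ * s1 t) + (-δ * s2 t) with hDdef
  have hVd : ∀ t ≥ (0:ℝ), HasDerivAt V (D t) t := fun t ht =>
    (((hf t ht).add (hm t ht)).add (hs1 t ht)).add (hs2 t ht)
  clear_value V D
  have hV0 : ∀ t ≥ (0:ℝ), 0 ≤ V t := by
    intro t ht
    obtain ⟨h1, h2, h3, h4⟩ := hnonneg t ht
    simp only [hVdef]; linarith
  have hbound : ∀ t ≥ (0:ℝ), D t ≤ -c * V t := by
    intro t ht
    obtain ⟨hf0, hm0, hs10, hs20⟩ := hnonneg t ht
    obtain ⟨hS, hVK⟩ := hreg t ht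
    have hSne : m t + s1 t + s2 t ≠ 0 := ne_of_gt hS
    have heq : D t = f t * β * (1 - V t / K) *
        ((m t * m t + s2 t * s2 t) / (m t + s1 t + s2 t)) - δ * V t := by
      simp only [hDdef, hVdef]
      field_simp
      ring
    have hVt : V t = f t + m t + s1 t + s2 t := by simp only [hVdef]
    have hL0 : 0 ≤ 1 - V t / K := by
      rw [sub_nonneg, div_le_one hK, hVt]; exact hVK
    have hL1 : 1 - V t / K ≤ 1 := by
      have : 0 ≤ V t / K := div_nonneg (hV0 t ht) hK.le
      linarith
    have hfK : f t ≤ K := by linarith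
    have hq0 : 0 ≤ (m t * m t + s2 t * s2 t) / (m t + s1 t + s2 t) :=
      div_nonneg (by positivity) hS.le
    have hqV : (m t * m t + s2 t * s2 t) / (m t + s1 t + s2 t) ≤ V t := by
      rw [div_le_iff₀ hS, hVt]
      nlinarith
    have h1 : f t * (1 - V t / K) ≤ K := by nlinarith
    have h2 : (f t * (1 - V t / K)) *
        ((m t * m t + s2 t * s2 t) / (m t + s1 t + s2 t)) ≤ K * V t :=
      mul_le_mul h1 hqV hq0 hK.le
    have h3 : f t * β * (1 - V t / K) *
        ((m t * m t + s2 t * s2 t) / (m t + s1 t + s2 t)) ≤ β * (K * V t) := by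
      calc f t * β * (1 - V t / K) * ((m t * m t + s2 t * s2 t) / (m t + s1 t + s2 t))
          = β * ((f t * (1 - V t / K)) * ((m t * m t + s2 t * s2 t) / (m t + s1 t + s2 t))) := by
            ring
        _ ≤ β * (K * V t) := mul_le_mul_of_nonneg_left h2 hβ.le
    have hcle : c ≤ δ - K * β := by rw [hcdef]; exact min_le_left _ _
    have h4 : 0 ≤ (δ - K * β - c) * V t :=
      mul_nonneg (by linarith) (hV0 t ht)
    have h3' : β * (K * V t) = K * β * V t := by ring
    have h4' : (δ - K * β - c) * V t = δ * V t - K * β * V t - c * V t := by ring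
    have hcv : -c * V t = -(c * V t) := by ring
    rw [heq]
    linarith [h3, h4]
  set g : ℝ → ℝ := fun t => V t * Real.exp (c * t) with hgdef
  have hgd : ∀ t ≥ (0:ℝ), HasDerivAt g ((D t + c * V t) * Real.exp (c * t)) t := by
    intro t ht
    have h1 : HasDerivAt (fun x : ℝ => Real.exp (c * x)) (c * Real.exp (c * t)) t := by
      simpa [mul_comm] using ((hasDerivAt_id t).const_mul c).exp
    have : HasDerivAt (fun y => V y * Real.exp (c * y)) (D t * Real.exp (c * t) + V t * (c * Real.exp (c * t))) t :=
      (hVd t ht).mul h1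
    convert this using 1
    ring
  clear_value g
  have hanti : AntitoneOn g (Set.Ici (0:ℝ)) := by
    apply antitoneOn_of_deriv_nonpos (convex_Ici 0)
    · intro t ht
      exact (hgd t ht).continuousAt.continuousWithinAt
    · intro t ht
      rw [interior_Ici] at ht
      exact (hgd t ht.le).differentiableAt.differentiableWithinAt
    · intro t ht
      rw [interior_Ici] at ht
      rw [(hgd t ht.le).deriv]
      apply mul_nonpos_of_nonpos_of_nonneg
      · have := hbound t ht.le
        linarith
      · exact (Real.exp_pos _).le
  have main : ∀ t ≥ (0:ℝ), V t ≤ V 0 * Real.exp (-c * t) := by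
    intro t ht
    have h := hanti (self_mem_Ici) ht ht
    have hg0 : g 0 = V 0 := by simp [hgdef]
    have hgt : g t = V t * Real.exp (c * t) := by simp only [hgdef]
    rw [hg0, hgt] at h
    rw [neg_mul, Real.exp_neg, mul_comm (V 0), ← div_eq_inv_mul, le_div_iff₀ (Real.exp_pos _)]
    linarith
  have main' : ∀ t ≥ (0:ℝ), f t + m t + s1 t + s2 t ≤
      (f 0 + m 0 + s1 0 + s2 0) * Real.exp (-c * t) := by
    intro t ht
    have h := main t ht
    simp only [hVdef] at h
    exact h
  have hexp : Filter.Tendsto (fun t : ℝ => (f 0 + m 0 + s1 0 + s2 0) * Real.exp (-c * t))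
      Filter.atTop (nhds 0) := by
    have h1 : Filter.Tendsto (fun t : ℝ => -c * t) Filter.atTop Filter.atBot :=
      Filter.Tendsto.const_mul_atTop_of_neg (by linarith) tendsto_id
    have h2 := Real.tendsto_exp_atBot.comp h1
    have h3 := h2.const_mul (f 0 + m 0 + s1 0 + s2 0)
    simpa using h3
  have squeeze : ∀ X : ℝ → ℝ,
      (∀ t : ℝ, t ≥ 0 → 0 ≤ X t ∧ X t ≤ f t + m t + s1 t + s2 t) →
      Filter.Tendsto X Filter.atTop (nhds 0) := by
    intro X hX
    apply tendsto_of_tendsto_of_tendsto_of_le_of_le'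
      (tendsto_const_nhds (x := (0:ℝ))) hexp
    · filter_upwards [Filter.eventually_ge_atTop (0:ℝ)] with t ht
      exact (hX t ht).1
    · filter_upwards [Filter.eventually_ge_atTop (0:ℝ)] with t ht
      have h := main' t ht
      have h2 := (hX t ht).2
      linarith
  refine ⟨hc, main', ?_, ?_, ?_, ?_⟩
  · refine squeeze f fun t ht => ⟨(hnonneg t ht).1, ?_⟩
    obtain ⟨h1, h2, h3, h4⟩ := hnonneg t ht
    linarith
  · refine squeeze m fun t ht => ⟨(hnonneg t ht).2.1, ?_⟩
    obtain ⟨h1, h2, h3, h4⟩ := hnonneg t ht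
    linarith
  · refine squeeze s1 fun t ht => ⟨(hnonneg t ht).2.2.1, ?_⟩
    obtain ⟨h1, h2, h3, h4⟩ := hnonneg t ht
    linarith
  · refine squeeze s2 fun t ht => ⟨(hnonneg t ht).2.2.2, ?_⟩
    obtain ⟨h1, h2, h3, h4⟩ := hnonneg t ht
    linarith
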